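/- A mixture of k product distributions on {0,1}^n has at most k strong modes. -/

import Mathlib

/-- For a product distribution, a strong mode forces every marginal to strictly
prefer the mode's bit. -/
lemma prod_strong_mode_marginal {n : ℕ} (f : Fin n → Bool → ℝ)
    (h0 : ∀ i b, 0 ≤ f i b)
    (x : Fin n → Bool)
    (hx : ∑ y ∈ Finset.univ.filter (fun y => hammingDist x y = 1),
        (∏ i, f i (y i)) < ∏ i, f i (x i)) :
    ∀ i, f i (!(x i)) < f i (x i) := by
  intro i
  have hsum0 : (0:ℝ) ≤ ∑ y ∈ Finset.univ.filter (fun y => hammingDist x y = 1),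
      (∏ i, f i (y i)) :=
    Finset.sum_nonneg fun y _ => Finset.prod_nonneg fun i _ => h0 i _
  have hppos : 0 < ∏ i, f i (x i) := lt_of_le_of_lt hsum0 hx
  have hfac : ∀ i', 0 < f i' (x i') := by
    intro i'
    rcases lt_or_eq_of_le (h0 i' (x i')) with h | h
    · exact h
    · exfalso
      have : (∏ i, f i (x i)) = 0 :=
        Finset.prod_eq_zero (Finset.mem_univ i') h.symm
      linarith
  set y : Fin n → Bool := Function.update x i (!(x i)) with hy
  have hmem : y ∈ Finset.univ.filter (fun y => hammingDist x y = 1) := by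
    simp only [Finset.mem_filter, Finset.mem_univ, true_and]
    have hfilter : (Finset.univ.filter fun i' => x i' ≠ y i') = {i} := by
      ext i'
      simp only [Finset.mem_filter, Finset.mem_univ, true_and, Finset.mem_singleton]
      constructor
      · intro h
        by_contra hne
        exact h (by simp [hy, Function.update_of_ne hne])
      · intro h
        subst h
        simp [hy]
    simpa [hammingDist] using congrArg Finset.card hfilter
  have hyle : (∏ i, f i (y i)) ≤ ∑ y ∈ Finset.univ.filter (fun y => hammingDist x y = 1),
      (∏ i, f i (y i)) :=
    Finset.single_le_sum (f := fun z => ∏ i, f i (z i))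
      (fun z _ => Finset.prod_nonneg fun i _ => h0 i _) hmem
  have hxprod : (∏ i', f i' (x i')) = f i (x i) * ∏ i' ∈ Finset.univ.erase i, f i' (x i') :=
    (Finset.mul_prod_erase Finset.univ _ (Finset.mem_univ i)).symm
  have hyprod : (∏ i', f i' (y i')) = f i (!(x i)) * ∏ i' ∈ Finset.univ.erase i, f i' (x i') := by
    rw [← Finset.mul_prod_erase Finset.univ _ (Finset.mem_univ i)]
    congr 1
    · simp [hy]
    · refine Finset.prod_congr rfl fun i' hi' => ?_
      have hne : i' ≠ i := (Finset.mem_erase.mp hi').1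
      simp [hy, Function.update_of_ne hne]
  have hPpos : 0 < ∏ i' ∈ Finset.univ.erase i, f i' (x i') :=
    Finset.prod_pos fun i' _ => hfac i'
  have hlt : f i (!(x i)) * ∏ i' ∈ Finset.univ.erase i, f i' (x i')
      < f i (x i) * ∏ i' ∈ Finset.univ.erase i, f i' (x i') := by
    rw [← hyprod, ← hxprod]
    exact lt_of_le_of_lt hyle hx
  exact (mul_lt_mul_iff_of_pos_right hPpos).mp hlt

/-- A product distribution has at most one strong mode. -/
lemma prod_strong_mode_unique {n : ℕ} (f : Fin n → Bool → ℝ)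
    (h0 : ∀ i b, 0 ≤ f i b) (h1 : ∀ i, f i false + f i true = 1)
    (x x' : Fin n → Bool)
    (hx : ∑ y ∈ Finset.univ.filter (fun y => hammingDist x y = 1),
        (∏ i, f i (y i)) < ∏ i, f i (x i))
    (hx' : ∑ y ∈ Finset.univ.filter (fun y => hammingDist x' y = 1),
        (∏ i, f i (y i)) < ∏ i, f i (x' i)) :
    x = x' := by
  funext i
  have h := prod_strong_mode_marginal f h0 x hx i
  have h' := prod_strong_mode_marginal f h0 x' hx' i
  by_contra hne
  have hb : x' i = !(x i) := by
    cases hxi : x i <;> cases hxi' : x' i <;> simp_all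
  rw [hb] at h'
  simp only [Bool.not_not] at h'
  have hsum : f i (x i) + f i (!(x i)) = 1 := by
    cases hxi : x i <;> simp only [hxi, Bool.not_true, Bool.not_false] <;> linarith [h1 i]
  linarith

/-- A mixture of `k` product distributions on `{0,1}^n` has at most `k` strong modes. -/
theorem mixture_at_most_k_strong_modes
    (n k : ℕ) (α : Fin k → ℝ) (hα0 : ∀ j, 0 ≤ α j) (hα1 : ∑ j, α j = 1)
    (q : Fin k → (Fin n → Bool) → ℝ)
    (hq : ∀ j, ∃ f : Fin n → Bool → ℝ, (∀ i b, 0 ≤ f i b) ∧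
      (∀ i, f i false + f i true = 1) ∧ ∀ x, q j x = ∏ i, f i (x i))
    (p : (Fin n → Bool) → ℝ) (hp : ∀ x, p x = ∑ j, α j * q j x) :
    {x : Fin n → Bool |
      ∑ y ∈ Finset.univ.filter (fun y => hammingDist x y = 1), p y < p x}.ncard ≤ k := by
  set S := {x : Fin n → Bool |
      ∑ y ∈ Finset.univ.filter (fun y => hammingDist x y = 1), p y < p x} with hS
  -- for each strong mode, some component is a strong mode of that component
  have hexists : ∀ x ∈ S, ∃ j : Fin k,
      ∑ y ∈ Finset.univ.filter (fun y => hammingDist x y = 1), q j y < q j x := by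
    intro x hx
    have hx' : ∑ y ∈ Finset.univ.filter (fun y => hammingDist x y = 1), p y < p x := hx
    rw [hp] at hx'
    have hsw : ∑ y ∈ Finset.univ.filter (fun y => hammingDist x y = 1), p y
        = ∑ j, α j * ∑ y ∈ Finset.univ.filter (fun y => hammingDist x y = 1), q j y := by
      simp only [hp, Finset.mul_sum]
      rw [Finset.sum_comm]
    rw [hsw] at hx'
    by_contra hcon
    push_neg at hcon
    have : ∑ j, α j * q j x ≤ ∑ j, α j *
        ∑ y ∈ Finset.univ.filter (fun y => hammingDist x y = 1), q j y :=
      Finset.sum_le_sum fun j _ => mul_le_mul_of_nonneg_left (hcon j) (hα0 j)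
    linarith
  classical
  choose g hg using hexists
  have hinj : Set.InjOn (fun x => g x.1 x.2) {x : S | True} := by
    intro a _ b _ hab
    simp only at hab
    have ha := hg a.1 a.2
    have hb := hg b.1 b.2
    rw [hab] at ha
    obtain ⟨f, hf0, hf1, hfq⟩ := hq (g b.1 b.2)
    have ha' : ∑ y ∈ Finset.univ.filter (fun y => hammingDist (a:Fin n → Bool) y = 1),
        (∏ i, f i (y i)) < ∏ i, f i ((a:Fin n → Bool) i) := by
      simpa only [hfq] using ha
    have hb' : ∑ y ∈ Finset.univ.filter (fun y => hammingDist (b:Fin n → Bool) y = 1),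
        (∏ i, f i (y i)) < ∏ i, f i ((b:Fin n → Bool) i) := by
      simpa only [hfq] using hb
    have := prod_strong_mode_unique f hf0 hf1 a b ha' hb'
    exact Subtype.ext this
  -- build an injection from S into Fin k
  have hfin : S.Finite := Set.toFinite S
  have : S.ncard = Fintype.card S := by
    rw [Set.ncard_eq_toFinset_card' S]
    simp
  rw [this]
  have hinj' : Function.Injective (fun x : S => g x.1 x.2) := by
    intro a b hab
    exact hinj trivial trivial hab
  calc Fintype.card S ≤ Fintype.card (Fin k) := Fintype.card_le_of_injective _ hinj'
    _ = k := Fintype.card_fin k
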